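/- Let N(t) denote the number of zeros ρ of the Riemann zeta function with 0 < Im(ρ) ≤ t, let g(t) = (t/(2π))·log(t/(2πe)) + 7/8, and assume |N(t) - g(t)| ≤ log t for all t ≥ 14. Then for 14 ≤ t₁ < t₂, the sum of 1/Im(ρ) over nontrivial zeros ρ with t₁ ≤ Im(ρ) < t₂ is at most (1/(4π))·[log(t₂/(2π))² - log(t₁/(2π))²] + 5·log(t₁)/t₁. -/

import Mathlib

open Complex

/-- The set of nontrivial zeros of the Riemann zeta function with imaginary part in `(0, t]`. -/
def zetaZerosUpTo (t : ℝ) : Set ℂ :=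
  {ρ : ℂ | riemannZeta ρ = 0 ∧ 0 < ρ.im ∧ ρ.im ≤ t}

/-- The zero-counting function `N(t)`. -/
noncomputable def zetaN (t : ℝ) : ℝ := (zetaZerosUpTo t).ncard

/-- The main term `g(t) = (t/2π) log(t/(2πe)) + 7/8` in the Riemann–von Mangoldt formula. -/
noncomputable def zetaG (t : ℝ) : ℝ :=
  t / (2 * Real.pi) * Real.log (t / (2 * Real.pi * Real.exp 1)) + 7 / 8

noncomputable def zetaPhi (t₁ t : ℝ) : ℝ := zetaG t - zetaG t₁ + Real.log t + Real.log t₁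

noncomputable def zetaPsi (t₁ t : ℝ) : ℝ :=
  -(zetaPhi t₁ t) / t + Real.log (t / (2 * Real.pi)) ^ 2 / (4 * Real.pi) - 1 / t

lemma log_shift {t : ℝ} (ht : 0 < t) :
    Real.log (t / (2 * Real.pi * Real.exp 1)) = Real.log (t / (2 * Real.pi)) - 1 := by
  have hπ := Real.pi_pos
  rw [Real.log_div ht.ne' (by positivity), Real.log_div ht.ne' (by positivity),
    Real.log_mul (by positivity) (Real.exp_pos 1).ne', Real.log_exp]
  ring

lemma hasDerivAt_zetaG {t : ℝ} (ht : 0 < t) :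
    HasDerivAt zetaG (Real.log (t / (2 * Real.pi)) / (2 * Real.pi)) t := by
  have hπ := Real.pi_pos
  have h2 : HasDerivAt (fun t : ℝ => t / (2 * Real.pi * Real.exp 1))
      (1 / (2 * Real.pi * Real.exp 1)) t := by
    simpa using (hasDerivAt_id t).div_const (2 * Real.pi * Real.exp 1)
  have h3 : HasDerivAt (fun t : ℝ => Real.log (t / (2 * Real.pi * Real.exp 1)))
      ((t / (2 * Real.pi * Real.exp 1))⁻¹ * (1 / (2 * Real.pi * Real.exp 1))) t :=
    (Real.hasDerivAt_log (by positivity)).comp t h2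
  have h1 : HasDerivAt (fun t : ℝ => t / (2 * Real.pi)) (1 / (2 * Real.pi)) t := by
    simpa using (hasDerivAt_id t).div_const (2 * Real.pi)
  have h4 := (h1.mul h3).add_const (7 / 8 : ℝ)
  have hG : zetaG = fun t : ℝ =>
      t / (2 * Real.pi) * Real.log (t / (2 * Real.pi * Real.exp 1)) + 7 / 8 := rfl
  rw [hG]
  convert h4 using 1
  · rfl
  · rfl
  · rfl
  rw [log_shift ht]
  have he := Real.exp_pos 1
  field_simp
  ring

lemma hasDerivAt_zetaPhi (t₁ : ℝ) {t : ℝ} (ht : 0 < t) :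
    HasDerivAt (zetaPhi t₁) (Real.log (t / (2 * Real.pi)) / (2 * Real.pi) + t⁻¹) t := by
  have h := (((hasDerivAt_zetaG ht).sub_const (zetaG t₁)).add
    (Real.hasDerivAt_log ht.ne')).add_const (Real.log t₁)
  have hφ : zetaPhi t₁ = fun t : ℝ => zetaG t - zetaG t₁ + Real.log t + Real.log t₁ := rfl
  rw [hφ]
  exact h

lemma hasDerivAt_zetaPsi (t₁ : ℝ) {t : ℝ} (ht : 0 < t) :
    HasDerivAt (zetaPsi t₁) (zetaPhi t₁ t / t ^ 2) t := by
  have hπ := Real.pi_pos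
  have hphi := hasDerivAt_zetaPhi t₁ ht
  have hdiv : HasDerivAt (fun t : ℝ => zetaPhi t₁ t / t)
      (((Real.log (t / (2 * Real.pi)) / (2 * Real.pi) + t⁻¹) * t - zetaPhi t₁ t * 1) / t ^ 2) t :=
    hphi.div (hasDerivAt_id t) ht.ne'
  have hL : HasDerivAt (fun t : ℝ => Real.log (t / (2 * Real.pi)))
      ((t / (2 * Real.pi))⁻¹ * (1 / (2 * Real.pi))) t := by
    exact (Real.hasDerivAt_log (by positivity)).comp t
      (by simpa using (hasDerivAt_id t).div_const (2 * Real.pi))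
  have hLsq := (hL.pow 2).div_const (4 * Real.pi)
  have hinv : HasDerivAt (fun t : ℝ => 1 / t) (-(t ^ 2)⁻¹) t := by
    simpa [one_div] using hasDerivAt_inv ht.ne'
  have h := (hdiv.neg.add hLsq).sub hinv
  have hΨ : zetaPsi t₁ = fun t : ℝ =>
      -(zetaPhi t₁ t) / t + Real.log (t / (2 * Real.pi)) ^ 2 / (4 * Real.pi) - 1 / t := rfl
  rw [hΨ]
  have ht' : t ≠ 0 := ht.ne'
  have hπ' : Real.pi ≠ 0 := Real.pi_ne_zero
  convert h using 1
  · rfl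
  · rfl
  · funext x; rw [neg_div]; rfl
  · rw [show ((t / (2 * Real.pi))⁻¹ : ℝ) = 2 * Real.pi / t from inv_div _ _]
    field_simp
    ring

lemma log_lt_zetaG {T : ℝ} (hT : 200 ≤ T) : Real.log T < zetaG T := by
  have hπ := Real.pi_pos
  have hπ315 : Real.pi < 3.15 := by
    have := Real.pi_lt_d6; linarith
  have he : Real.exp 1 < 2.7182818286 := Real.exp_one_lt_d9
  have he0 := Real.exp_pos 1
  have hT0 : (0 : ℝ) < T := by linarith
  have h2πe : 2 * Real.pi * Real.exp 1 ≤ 18 := by nlinarith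
  have h2πe0 : (0 : ℝ) < 2 * Real.pi * Real.exp 1 := by positivity
  have hlog2 : (2 : ℝ) ≤ Real.log (T / (2 * Real.pi * Real.exp 1)) := by
    rw [Real.le_log_iff_exp_le (by positivity)]
    have hexp2 : Real.exp 2 = Real.exp 1 * Real.exp 1 := by
      rw [← Real.exp_add]; norm_num
    have hx : Real.exp 2 < 8 := by nlinarith
    have h8 : (8 : ℝ) ≤ T / (2 * Real.pi * Real.exp 1) := by
      rw [le_div_iff₀ h2πe0]; nlinarith
    linarith
  have hsq : Real.sqrt T ≤ T / 10 := by
    have h := Real.sqrt_le_sqrt (show T ≤ (T / 10) ^ 2 by nlinarith)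
    rwa [Real.sqrt_sq (by linarith)] at h
  have hlogT : Real.log T ≤ T / 5 := by
    have h1 : Real.log (Real.sqrt T) ≤ Real.sqrt T - 1 :=
      Real.log_le_sub_one_of_pos (Real.sqrt_pos.mpr hT0)
    rw [Real.log_sqrt hT0.le] at h1
    linarith
  have hgT : T / (2 * Real.pi) * 2 + 7 / 8 ≤ zetaG T := by
    have h0 : 0 < T / (2 * Real.pi) := by positivity
    have := mul_le_mul_of_nonneg_left hlog2 h0.le
    unfold zetaG
    linarith
  have h5 : T / 5 < T / Real.pi := by
    apply div_lt_div_of_pos_left hT0 hπ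
    linarith
  have hTP : T / (2 * Real.pi) * 2 = T / Real.pi := by
    field_simp
  rw [hTP] at hgT
  linarith

lemma zetaZerosUpTo_finite {T : ℝ} (hT : 200 ≤ T)
    (hR : |zetaN T - zetaG T| ≤ Real.log T) : (zetaZerosUpTo T).Finite := by
  by_contra h
  have h0 : zetaN T = 0 := by
    unfold zetaN
    rw [Set.Infinite.ncard h]
    simp
  have h1 := (abs_le.mp hR).1
  have h2 := log_lt_zetaG hT
  rw [h0] at h1
  linarith
noncomputable def zetaH (ρ : ℂ) (t : ℝ) : ℝ := if ρ.im < t then (t ^ 2)⁻¹ else 0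

/-- Assuming Rosser's estimate `|N(t) - g(t)| ≤ log t` for `t ≥ 14`, the sum of `1/Im ρ`
over the zeros with `t₁ ≤ Im ρ < t₂` is bounded by
`(1/4π)[log(t₂/2π)² - log(t₁/2π)²] + 5 log(t₁)/t₁`. -/
theorem zeta_zero_reciprocal_sum_bound (t₁ t₂ : ℝ) (h₁ : 14 ≤ t₁) (h₁₂ : t₁ < t₂)
    (hRosser : ∀ t : ℝ, 14 ≤ t → |zetaN t - zetaG t| ≤ Real.log t) :
    (∑' ρ : {ρ : ℂ // riemannZeta ρ = 0 ∧ t₁ ≤ ρ.im ∧ ρ.im < t₂},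
        1 / ρ.val.im)
      ≤ 1 / (4 * Real.pi) *
          (Real.log (t₂ / (2 * Real.pi)) ^ 2 - Real.log (t₁ / (2 * Real.pi)) ^ 2)
        + 5 * Real.log t₁ / t₁ := by
  classical
  have hπ := Real.pi_pos
  have ht₁0 : (0 : ℝ) < t₁ := by linarith
  have ht₂0 : (0 : ℝ) < t₂ := by linarith
  set T : ℝ := max t₂ 200 with hT
  have hT200 : (200 : ℝ) ≤ T := le_max_right _ _
  have hT2 : t₂ ≤ T := le_max_left _ _
  have hTfin : (zetaZerosUpTo T).Finite :=
    zetaZerosUpTo_finite hT200 (hRosser T (by linarith))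
  have hZsub : {ρ : ℂ | riemannZeta ρ = 0 ∧ t₁ ≤ ρ.im ∧ ρ.im < t₂} ⊆ zetaZerosUpTo T := by
    rintro ρ ⟨h0, hl, hr⟩
    exact ⟨h0, by linarith, by linarith⟩
  have hZfin : {ρ : ℂ | riemannZeta ρ = 0 ∧ t₁ ≤ ρ.im ∧ ρ.im < t₂}.Finite := hTfin.subset hZsub
  set s : Finset ℂ := hZfin.toFinset with hs
  have hmem : ∀ ρ ∈ s, riemannZeta ρ = 0 ∧ t₁ ≤ ρ.im ∧ ρ.im < t₂ := by
    intro ρ hρ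
    rwa [hs, Set.Finite.mem_toFinset] at hρ
  -- convert tsum to finite sum
  have hsum : (∑' ρ : {ρ : ℂ // riemannZeta ρ = 0 ∧ t₁ ≤ ρ.im ∧ ρ.im < t₂}, 1 / ρ.val.im)
      = ∑ ρ ∈ s, 1 / ρ.im := by
    have h0 : (∑' ρ : {ρ : ℂ // riemannZeta ρ = 0 ∧ t₁ ≤ ρ.im ∧ ρ.im < t₂}, 1 / ρ.val.im)
        = ∑' x : ℂ, ({ρ : ℂ | riemannZeta ρ = 0 ∧ t₁ ≤ ρ.im ∧ ρ.im < t₂}).indicator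
            (fun ρ => 1 / ρ.im) x :=
      tsum_subtype {ρ : ℂ | riemannZeta ρ = 0 ∧ t₁ ≤ ρ.im ∧ ρ.im < t₂} (fun ρ => 1 / ρ.im)
    rw [h0, tsum_eq_sum (s := s) (by
      intro b hb
      exact Set.indicator_of_notMem (by rwa [hs, Set.Finite.mem_toFinset] at hb) _)]
    exact Finset.sum_congr rfl fun ρ hρ =>
      Set.indicator_of_mem (by rwa [hs, Set.Finite.mem_toFinset] at hρ) _
  rw [hsum]
  -- counting bound
  have hcount : ∀ t, t₁ < t → t ≤ t₂ →
      (((s.filter (fun ρ => ρ.im < t)).card : ℝ)) ≤ zetaPhi t₁ t := by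
    intro t hlt hle
    have ht14 : (14 : ℝ) ≤ t := by linarith
    have htT : t ≤ T := le_trans hle hT2
    have hUfin : (zetaZerosUpTo t).Finite := by
      apply hTfin.subset
      rintro ρ ⟨h0, hp, hq⟩
      exact ⟨h0, hp, hq.trans htT⟩
    have hsubt : (↑(s.filter (fun ρ => ρ.im < t)) : Set ℂ) ⊆ zetaZerosUpTo t := by
      intro ρ hρ
      rw [Finset.coe_filter] at hρ
      obtain ⟨hρs, hlt'⟩ := hρ
      obtain ⟨h0, hl, _⟩ := hmem ρ hρs
      exact ⟨h0, by linarith, hlt'.le⟩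
    have hNt := abs_le.mp (hRosser t ht14)
    have hcard_le : (((s.filter (fun ρ => ρ.im < t)).card : ℝ)) ≤ zetaN t := by
      have h := Set.ncard_le_ncard hsubt hUfin
      rw [Set.ncard_coe_finset] at h
      unfold zetaN
      exact_mod_cast h
    by_cases hc : zetaG t₁ ≤ Real.log t₁
    · unfold zetaPhi
      linarith [hNt.2]
    · push_neg at hc
      have h14lt : 14 < t₁ := by
        rcases lt_or_eq_of_le h₁ with h | h
        · exact h
        · exfalso
          have hπlt : Real.pi > 3.141592 := Real.pi_gt_d6
          have hegt : Real.exp 1 > 2.7182818283 := Real.exp_one_gt_d9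
          have hg14 : zetaG t₁ ≤ 7 / 8 := by
            unfold zetaG
            have hlognp : Real.log (t₁ / (2 * Real.pi * Real.exp 1)) ≤ 0 := by
              apply Real.log_nonpos (by positivity)
              rw [div_le_one (by positivity)]
              nlinarith
            nlinarith [mul_nonpos_of_nonneg_of_nonpos
              (by positivity : (0:ℝ) ≤ t₁ / (2 * Real.pi)) hlognp]
          have hlog14 : (1 : ℝ) ≤ Real.log t₁ := by
            rw [Real.le_log_iff_exp_le ht₁0]
            nlinarith [Real.exp_one_lt_d9]
          linarith
      have hev : ∀ᶠ u in nhdsWithin t₁ (Set.Iio t₁),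
          (((s.filter (fun ρ => ρ.im < t)).card : ℝ))
            ≤ zetaG t + Real.log t - (zetaG u - Real.log u) := by
        filter_upwards [Ioo_mem_nhdsLT_of_mem
          (⟨h14lt, le_refl t₁⟩ : t₁ ∈ Set.Ioc 14 t₁)] with u hu
        obtain ⟨hu14, hu1⟩ := hu
        have hNu := abs_le.mp (hRosser u hu14.le)
        have hufin : (zetaZerosUpTo u).Finite := by
          apply hTfin.subset
          rintro ρ ⟨h0, hp, hq⟩
          exact ⟨h0, hp, by linarith⟩
        have hd : Disjoint (↑(s.filter (fun ρ => ρ.im < t)) : Set ℂ) (zetaZerosUpTo u) := by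
          rw [Set.disjoint_left]
          intro ρ hρ hρ'
          rw [Finset.coe_filter] at hρ
          obtain ⟨hρs, _⟩ := hρ
          obtain ⟨_, hl, _⟩ := hmem ρ hρs
          obtain ⟨_, _, hq⟩ := hρ'
          linarith
        have hsub2 : (↑(s.filter (fun ρ => ρ.im < t)) : Set ℂ) ∪ zetaZerosUpTo u
            ⊆ zetaZerosUpTo t := by
          rintro ρ (hρ | hρ)
          · exact hsubt hρ
          · obtain ⟨h0, hp, hq⟩ := hρ
            exact ⟨h0, hp, by linarith⟩
        have hcards := Set.ncard_le_ncard hsub2 hUfin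
        rw [Set.ncard_union_eq hd ((s.filter (fun ρ => ρ.im < t)).finite_toSet) hufin,
          Set.ncard_coe_finset] at hcards
        have hcards' : (((s.filter (fun ρ => ρ.im < t)).card : ℝ)) + zetaN u ≤ zetaN t := by
          unfold zetaN
          exact_mod_cast hcards
        linarith [hNu.1, hNt.2]
      have htend : Filter.Tendsto (fun u => zetaG t + Real.log t - (zetaG u - Real.log u))
          (nhdsWithin t₁ (Set.Iio t₁))
          (nhds (zetaG t + Real.log t - (zetaG t₁ - Real.log t₁))) := by
        apply Filter.Tendsto.mono_left _ nhdsWithin_le_nhds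
        exact (tendsto_const_nhds.sub (((hasDerivAt_zetaG ht₁0).continuousAt).sub
          (Real.continuousAt_log ht₁0.ne')).tendsto)
      have hfin := ge_of_tendsto htend hev
      unfold zetaPhi
      linarith
  -- integrability of (t^2)⁻¹
  have hinv_cont : ∀ a b : ℝ, t₁ ≤ a → t₁ ≤ b →
      IntervalIntegrable (fun t : ℝ => (t ^ 2)⁻¹) MeasureTheory.volume a b := by
    intro a b ha hb
    apply ContinuousOn.intervalIntegrable
    intro x hx
    have hx0 : 0 < x := lt_of_lt_of_le ht₁0 (le_trans (le_min ha hb) hx.1)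
    exact ((continuousOn_id.pow 2).inv₀
      (fun y hy => pow_ne_zero 2 (lt_of_lt_of_le ht₁0 (le_trans (le_min ha hb) hy.1)).ne')) x hx
  have hint : ∀ ρ ∈ s, IntervalIntegrable (zetaH ρ) MeasureTheory.volume t₁ t₂ := by
    intro ρ hρ
    have heq : zetaH ρ = Set.indicator (Set.Ioi ρ.im) (fun t => (t ^ 2)⁻¹) := by
      funext t
      simp [zetaH, Set.indicator_apply, Set.mem_Ioi]
    rw [heq, intervalIntegrable_iff]
    exact (intervalIntegrable_iff.mp (hinv_cont t₁ t₂ le_rfl h₁₂.le)).indicator measurableSet_Ioi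
  -- per-zero identity
  have hid : ∀ ρ ∈ s, 1 / ρ.im = 1 / t₂ + ∫ t in t₁..t₂, zetaH ρ t := by
    intro ρ hρ
    obtain ⟨_, hl, hr⟩ := hmem ρ hρ
    have hγ0 : 0 < ρ.im := lt_of_lt_of_le ht₁0 hl
    have hmemI : ρ.im ∈ Set.uIcc t₁ t₂ := by
      rw [Set.uIcc_of_le h₁₂.le]; exact ⟨hl, hr.le⟩
    have hi1 : IntervalIntegrable (zetaH ρ) MeasureTheory.volume t₁ ρ.im :=
      (hint ρ hρ).mono_set (Set.uIcc_subset_uIcc Set.left_mem_uIcc hmemI)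
    have hi2 : IntervalIntegrable (zetaH ρ) MeasureTheory.volume ρ.im t₂ :=
      (hint ρ hρ).mono_set (Set.uIcc_subset_uIcc hmemI Set.right_mem_uIcc)
    have e1 : (∫ t in t₁..ρ.im, zetaH ρ t) = 0 := by
      rw [intervalIntegral.integral_congr (g := fun _ => 0) (by
        intro x hx
        rw [Set.uIcc_of_le hl] at hx
        simp [zetaH, not_lt.mpr hx.2])]
      simp
    have e2 : (∫ t in ρ.im..t₂, zetaH ρ t) = (ρ.im)⁻¹ - t₂⁻¹ := by
      have hcg : (∫ t in ρ.im..t₂, zetaH ρ t) = ∫ t in ρ.im..t₂, (t ^ 2)⁻¹ := by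
        apply intervalIntegral.integral_congr_ae
        filter_upwards with x hx
        rw [Set.uIoc_of_le hr.le] at hx
        simp [zetaH, hx.1]
      rw [hcg]
      have hftc : (∫ t in ρ.im..t₂, (t ^ 2)⁻¹)
          = -t₂⁻¹ - -(ρ.im)⁻¹ := by
        apply intervalIntegral.integral_eq_sub_of_hasDerivAt (f := fun t : ℝ => -t⁻¹)
        · intro x hx
          rw [Set.uIcc_of_le hr.le] at hx
          have hx0 : x ≠ 0 := (lt_of_lt_of_le hγ0 hx.1).ne'
          exact (hasDerivAt_inv hx0).neg.congr_deriv (neg_neg _)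
        · exact hinv_cont ρ.im t₂ hl h₁₂.le
      rw [hftc]; ring
    have hsplit := intervalIntegral.integral_add_adjacent_intervals hi1 hi2
    rw [e1, e2] at hsplit
    rw [← hsplit, one_div, one_div]
    ring
  -- bound M
  have hMle : ((s.card : ℝ)) ≤ zetaPhi t₁ t₂ := by
    have h := hcount t₂ h₁₂ le_rfl
    rwa [Finset.filter_true_of_mem (fun ρ hρ => (hmem ρ hρ).2.2)] at h
  -- pointwise bound for the integrand
  have hlog1 : (1 : ℝ) ≤ Real.log t₁ := by
    rw [Real.le_log_iff_exp_le ht₁0]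
    nlinarith [Real.exp_one_lt_d9]
  have hptwise : ∀ t ∈ Set.Icc t₁ t₂, (∑ ρ ∈ s, zetaH ρ t) ≤ zetaPhi t₁ t / t ^ 2 := by
    intro t ht
    have ht0 : 0 < t := lt_of_lt_of_le ht₁0 ht.1
    have hsum_eq : (∑ ρ ∈ s, zetaH ρ t)
        = ((s.filter (fun ρ => ρ.im < t)).card : ℝ) * (t ^ 2)⁻¹ := by
      rw [show (∑ ρ ∈ s, zetaH ρ t) = ∑ ρ ∈ s, if ρ.im < t then (t ^ 2)⁻¹ else 0 from rfl,
        ← Finset.sum_filter, Finset.sum_const, nsmul_eq_mul]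
    rcases eq_or_lt_of_le ht.1 with heq | hlt
    · have hempty : s.filter (fun ρ => ρ.im < t) = ∅ := by
        rw [Finset.filter_eq_empty_iff]
        intro ρ hρ
        rw [← heq]
        exact not_lt.mpr (hmem ρ hρ).2.1
      rw [hsum_eq, hempty]
      have hφ0 : 0 ≤ zetaPhi t₁ t := by
        rw [← heq]
        unfold zetaPhi
        linarith
      simp only [Finset.card_empty, Nat.cast_zero, zero_mul]
      positivity
    · have hφ := hcount t hlt ht.2
      rw [hsum_eq, div_eq_mul_inv]
      exact mul_le_mul_of_nonneg_right hφ (by positivity)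
  -- integrability of the two integrands
  have hφint : IntervalIntegrable (fun t => zetaPhi t₁ t / t ^ 2) MeasureTheory.volume t₁ t₂ := by
    apply ContinuousOn.intervalIntegrable
    intro x hx
    rw [Set.uIcc_of_le h₁₂.le] at hx
    have hx0 : 0 < x := lt_of_lt_of_le ht₁0 hx.1
    apply ContinuousAt.continuousWithinAt
    exact ((hasDerivAt_zetaPhi t₁ hx0).continuousAt).div
      ((continuousAt_id.pow 2)) (pow_ne_zero 2 hx0.ne')
  have hsumint : IntervalIntegrable (fun t => ∑ ρ ∈ s, zetaH ρ t) MeasureTheory.volume t₁ t₂ := by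
    have h := IntervalIntegrable.sum s hint
    have he : (∑ ρ ∈ s, zetaH ρ) = fun t => ∑ ρ ∈ s, zetaH ρ t := by
      funext t; simp [Finset.sum_apply]
    rwa [he] at h
  -- FTC for the main term
  have hftcΨ : (∫ t in t₁..t₂, zetaPhi t₁ t / t ^ 2) = zetaPsi t₁ t₂ - zetaPsi t₁ t₁ := by
    apply intervalIntegral.integral_eq_sub_of_hasDerivAt
    · intro x hx
      rw [Set.uIcc_of_le h₁₂.le] at hx
      exact hasDerivAt_zetaPsi t₁ (lt_of_lt_of_le ht₁0 hx.1)
    · exact hφint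
  -- main chain
  have hchain : (∑ ρ ∈ s, 1 / ρ.im)
      ≤ zetaPhi t₁ t₂ * (1 / t₂) + (zetaPsi t₁ t₂ - zetaPsi t₁ t₁) := by
    calc (∑ ρ ∈ s, 1 / ρ.im)
        = ∑ ρ ∈ s, (1 / t₂ + ∫ t in t₁..t₂, zetaH ρ t) := Finset.sum_congr rfl hid
      _ = (s.card : ℝ) * (1 / t₂) + ∑ ρ ∈ s, ∫ t in t₁..t₂, zetaH ρ t := by
          rw [Finset.sum_add_distrib, Finset.sum_const, nsmul_eq_mul]
      _ = (s.card : ℝ) * (1 / t₂) + ∫ t in t₁..t₂, ∑ ρ ∈ s, zetaH ρ t := by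
          rw [intervalIntegral.integral_finset_sum hint]
      _ ≤ zetaPhi t₁ t₂ * (1 / t₂) + ∫ t in t₁..t₂, zetaPhi t₁ t / t ^ 2 := by
          apply add_le_add
          · exact mul_le_mul_of_nonneg_right hMle (by positivity)
          · exact intervalIntegral.integral_mono_on h₁₂.le hsumint hφint hptwise
      _ = zetaPhi t₁ t₂ * (1 / t₂) + (zetaPsi t₁ t₂ - zetaPsi t₁ t₁) := by rw [hftcΨ]
  -- final algebra
  have hexpand : zetaPhi t₁ t₂ * (1 / t₂) + (zetaPsi t₁ t₂ - zetaPsi t₁ t₁)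
      = 1 / (4 * Real.pi) *
          (Real.log (t₂ / (2 * Real.pi)) ^ 2 - Real.log (t₁ / (2 * Real.pi)) ^ 2)
        + 2 * Real.log t₁ / t₁ + 1 / t₁ - 1 / t₂ := by
    unfold zetaPsi zetaPhi
    have h1 : t₁ ≠ 0 := ht₁0.ne'
    have h2 : t₂ ≠ 0 := ht₂0.ne'
    have h3 : Real.pi ≠ 0 := Real.pi_ne_zero
    field_simp
    ring
  have hA : (1 : ℝ) / t₁ ≤ 3 * Real.log t₁ / t₁ := by
    gcongr
    linarith
  have h1t₂ : (0 : ℝ) < 1 / t₂ := by positivity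
  rw [hexpand] at hchain
  have hB : 2 * Real.log t₁ / t₁ + 3 * Real.log t₁ / t₁ = 5 * Real.log t₁ / t₁ := by ring
  linarith
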